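/- Let α, β, η > 0 and τ, T ∈ ℕ with τ ≤ T. Suppose for each t ∈ {τ,...,T} the cumulative losses satisfy L_t^{k^*} = min_k L_t^k and L_t^k − L_t^{k^*} ≥ α·t^β for all k ≠ k^*, and let w_{t+1}^*(η) = e^{-η L_t^{k^*}}/Σ_k e^{-η L_t^k}. Then Σ_{t=τ}^T (1 − w_{t+1}^*(η)) ≤ (K−1)·(αη)^{-1/β}·Γ(1 + 1/β). -/

import Mathlib

open Real MeasureTheory Set

lemma integrableOn_exp_neg_mul_rpow' {b p : ℝ} (hb : 0 < b) (hp : 0 < p) :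
    IntegrableOn (fun x : ℝ => Real.exp (-b * x ^ p)) (Ioi 0) := by
  have hf : IntegrableOn (fun y : ℝ => y ^ ((1 - p)/p) * Real.exp (-b * y)) (Ioi 0) := by
    have := integrableOn_rpow_mul_exp_neg_mul_rpow (s := (1 - p)/p) (p := 1)
      (by rw [lt_div_iff₀ hp]; nlinarith) one_pos hb
    simpa using this
  have h2 := (integrableOn_Ioi_comp_rpow_iff'
      (fun y : ℝ => y ^ ((1 - p)/p) * Real.exp (-b * y)) (p := p) hp.ne').mpr hf
  refine (integrableOn_congr_fun (fun x hx => ?_) measurableSet_Ioi).mp h2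
  have hx0 : (0:ℝ) < x := hx
  have hxp : (0:ℝ) < x ^ p := rpow_pos_of_pos hx0 p
  have hex : p - 1 + p * ((1 - p)/p) = 0 := by field_simp; ring
  rw [smul_eq_mul, ← Real.rpow_mul hx0.le, ← mul_assoc, ← Real.rpow_add hx0, hex,
    Real.rpow_zero, one_mul]

theorem posterior_convergence_sum_bound (K : ℕ) (hK : 0 < K)
    (L : ℕ → Fin K → ℝ) (kstar : Fin K)
    (α β η : ℝ) (hα : 0 < α) (hβ : 0 < β) (hη : 0 < η)
    (τ T : ℕ) (hτ : 1 ≤ τ) (hτT : τ ≤ T)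
    (hmin : ∀ t ∈ Finset.Icc τ T, ∀ k, L t kstar ≤ L t k)
    (hdiv : ∀ t ∈ Finset.Icc τ T, ∀ k, k ≠ kstar →
      L t k - L t kstar ≥ α * (t : ℝ) ^ β) :
    ∑ t ∈ Finset.Icc τ T,
        (1 - Real.exp (-η * L t kstar) / ∑ k, Real.exp (-η * L t k)) ≤
      ((K : ℝ) - 1) * (α * η) ^ (-(1/β)) * Real.Gamma (1 + 1/β) := by
  set c := α * η with hc
  have hc0 : 0 < c := mul_pos hα hη
  have hK1 : (1:ℝ) ≤ (K:ℝ) := by exact_mod_cast hK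
  -- pointwise bound
  have key : ∀ t ∈ Finset.Icc τ T,
      1 - Real.exp (-η * L t kstar) / ∑ k, Real.exp (-η * L t k)
        ≤ ((K:ℝ) - 1) * Real.exp (-c * (t:ℝ) ^ β) := by
    intro t ht
    have hS : 0 < ∑ k, Real.exp (-η * L t k) :=
      Finset.sum_pos (fun k _ => Real.exp_pos _) ⟨kstar, Finset.mem_univ _⟩
    have hstar : Real.exp (-η * L t kstar) ≤ ∑ k, Real.exp (-η * L t k) :=
      Finset.single_le_sum (f := fun k => Real.exp (-η * L t k))
        (fun k _ => (Real.exp_pos _).le) (Finset.mem_univ kstar)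
    have hsplit : ∑ k, Real.exp (-η * L t k)
        = (∑ k ∈ Finset.univ.erase kstar, Real.exp (-η * L t k))
          + Real.exp (-η * L t kstar) :=
      (Finset.sum_erase_add _ _ (Finset.mem_univ kstar)).symm
    have h1 : 1 - Real.exp (-η * L t kstar) / ∑ k, Real.exp (-η * L t k)
        = (∑ k ∈ Finset.univ.erase kstar, Real.exp (-η * L t k))
            / ∑ k, Real.exp (-η * L t k) := by
      rw [eq_div_iff hS.ne', sub_mul, one_mul, div_mul_cancel₀ _ hS.ne', hsplit]
      ring
    have hnum : ∑ k ∈ Finset.univ.erase kstar, Real.exp (-η * L t k)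
        ≤ ((K:ℝ) - 1) * (Real.exp (-η * L t kstar) * Real.exp (-c * (t:ℝ) ^ β)) := by
      have hb : ∀ k ∈ Finset.univ.erase kstar,
          Real.exp (-η * L t k)
            ≤ Real.exp (-η * L t kstar) * Real.exp (-c * (t:ℝ) ^ β) := by
        intro k hk
        rw [← Real.exp_add]
        apply Real.exp_le_exp.mpr
        have := hdiv t ht k (Finset.ne_of_mem_erase hk)
        rw [hc]; nlinarith
      calc ∑ k ∈ Finset.univ.erase kstar, Real.exp (-η * L t k)
          ≤ ∑ _k ∈ Finset.univ.erase kstar,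
              Real.exp (-η * L t kstar) * Real.exp (-c * (t:ℝ) ^ β) :=
            Finset.sum_le_sum hb
        _ = ((K:ℝ) - 1) * (Real.exp (-η * L t kstar) * Real.exp (-c * (t:ℝ) ^ β)) := by
            rw [Finset.sum_const, nsmul_eq_mul, Finset.card_erase_of_mem (Finset.mem_univ _),
              Finset.card_univ, Fintype.card_fin, Nat.cast_sub hK, Nat.cast_one]
    rw [h1]
    calc (∑ k ∈ Finset.univ.erase kstar, Real.exp (-η * L t k))
            / ∑ k, Real.exp (-η * L t k)
        ≤ (∑ k ∈ Finset.univ.erase kstar, Real.exp (-η * L t k))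
            / Real.exp (-η * L t kstar) := by
          gcongr
      _ ≤ (((K:ℝ) - 1) * (Real.exp (-η * L t kstar) * Real.exp (-c * (t:ℝ) ^ β)))
            / Real.exp (-η * L t kstar) := by gcongr
      _ = ((K:ℝ) - 1) * Real.exp (-c * (t:ℝ) ^ β) := by
          rw [mul_comm (Real.exp (-η * L t kstar)), mul_div_assoc, mul_div_assoc,
            div_self (Real.exp_ne_zero _), mul_one]
  -- integral comparison
  have hanti : AntitoneOn (fun x : ℝ => Real.exp (-c * x ^ β))
      (Icc ((τ - 1 : ℕ) : ℝ) ((T : ℕ) : ℝ)) := by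
    intro x hx y hy hxy
    apply Real.exp_le_exp.mpr
    have hx0 : (0:ℝ) ≤ x := le_trans (Nat.cast_nonneg _) hx.1
    have : x ^ β ≤ y ^ β := Real.rpow_le_rpow hx0 hxy hβ.le
    nlinarith
  have hreindex : ∑ t ∈ Finset.Icc τ T, Real.exp (-c * (t:ℝ) ^ β)
      = ∑ i ∈ Finset.Ico (τ - 1) T, Real.exp (-c * ((i + 1 : ℕ) : ℝ) ^ β) := by
    rw [← Finset.Ico_add_one_right_eq_Icc]
    rw [show Finset.Ico τ (T + 1) = Finset.Ico ((τ - 1) + 1) (T + 1) by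
      rw [Nat.sub_add_cancel hτ]]
    rw [Finset.sum_Ico_eq_sum_range, Finset.sum_Ico_eq_sum_range]
    simp [Nat.add_right_comm]
  have hsum_int : ∑ i ∈ Finset.Ico (τ - 1) T, Real.exp (-c * ((i + 1 : ℕ) : ℝ) ^ β)
      ≤ ∫ x in ((τ - 1 : ℕ) : ℝ)..((T : ℕ) : ℝ), Real.exp (-c * x ^ β) :=
    AntitoneOn.sum_le_integral_Ico (by omega) hanti
  have hint : IntegrableOn (fun x : ℝ => Real.exp (-c * x ^ β)) (Ioi 0) :=
    integrableOn_exp_neg_mul_rpow' hc0 hβ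
  have hint_le : (∫ x in ((τ - 1 : ℕ) : ℝ)..((T : ℕ) : ℝ), Real.exp (-c * x ^ β))
      ≤ ∫ x in Ioi (0:ℝ), Real.exp (-c * x ^ β) := by
    rw [intervalIntegral.integral_of_le (by exact_mod_cast (by omega : τ - 1 ≤ T))]
    apply setIntegral_mono_set hint
    · filter_upwards with x using (Real.exp_pos _).le
    · apply HasSubset.Subset.eventuallyLE
      intro x hx
      exact lt_of_le_of_lt (Nat.cast_nonneg _) hx.1
  have hval : (∫ x in Ioi (0:ℝ), Real.exp (-c * x ^ β))
      = c ^ (-(1/β)) * Real.Gamma (1 + 1/β) := by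
    rw [integral_exp_neg_mul_rpow hβ hc0, neg_div, add_comm]
  calc ∑ t ∈ Finset.Icc τ T,
          (1 - Real.exp (-η * L t kstar) / ∑ k, Real.exp (-η * L t k))
      ≤ ∑ t ∈ Finset.Icc τ T, ((K:ℝ) - 1) * Real.exp (-c * (t:ℝ) ^ β) :=
        Finset.sum_le_sum key
    _ = ((K:ℝ) - 1) * ∑ t ∈ Finset.Icc τ T, Real.exp (-c * (t:ℝ) ^ β) := by
        rw [Finset.mul_sum]
    _ ≤ ((K:ℝ) - 1) * (c ^ (-(1/β)) * Real.Gamma (1 + 1/β)) := by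
        apply mul_le_mul_of_nonneg_left _ (by linarith)
        rw [hreindex, ← hval]
        exact hsum_int.trans hint_le
    _ = ((K : ℝ) - 1) * c ^ (-(1/β)) * Real.Gamma (1 + 1/β) := by ring
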